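/- Let B = ∂_d[L, L₀] be a k×k square submatrix of the integral d-boundary matrix of a simplicial complex, obtained by including columns of d-simplices in L and excluding rows of (d-1)-simplices in L₀. Then |det B| is at most the cardinality of the torsion subgroup of the relative homology group H_{d-1}(L, L₀; ℤ). -/

import Mathlib

open Matrix

/-- An abstract simplicial complex on vertex set `V`: a finite, downward-closed
family of nonempty finite subsets of `V`. -/
structure SComplex (V : Type) where
  faces : Finset (Finset V)
  down_closed : ∀ s ∈ faces, ∀ t ⊆ s, t.Nonempty → t ∈ faces

/-- The index type of `d`-dimensional simplices (i.e. `(d+1)`-element subsets) on `V`. -/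
abbrev SimpIdx (V : Type) (d : ℕ) := {s : Finset V // s.card = d + 1}

variable {V : Type} [Fintype V] [LinearOrder V]

/-- The signed incidence coefficient of the boundary operator: for `τ ⊆ σ` of
codimension one it is `(-1)ⁱ` where `i` is the position of the removed vertex. -/
def bsign (τ σ : Finset V) : ℤ :=
  if τ ⊆ σ ∧ τ.card + 1 = σ.card then
    (-1 : ℤ) ^ (σ.filter (fun w => ∃ v ∈ σ \ τ, w < v)).card
  else 0

/-- The global integral boundary matrix `∂_{d+1}` from `(d+1)`-dimensional to
`d`-dimensional simplices on the vertex set `V`. -/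
def gbdryZ (V : Type) [Fintype V] [LinearOrder V] (d : ℕ) :
    Matrix (SimpIdx V d) (SimpIdx V (d + 1)) ℤ :=
  fun τ σ => bsign (τ : Finset V) (σ : Finset V)

/-- The global real boundary matrix. -/
noncomputable def gbdry (V : Type) [Fintype V] [LinearOrder V] (d : ℕ) :
    Matrix (SimpIdx V d) (SimpIdx V (d + 1)) ℝ :=
  (gbdryZ V d).map (fun z => (z : ℝ))

/-- Diagonal 0/1 matrix indicating membership of simplices in the complex `K`. -/
noncomputable def SComplex.ind (K : SComplex V) (d : ℕ) :
    Matrix (SimpIdx V d) (SimpIdx V d) ℝ :=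
  Matrix.diagonal fun σ => if (σ : Finset V) ∈ K.faces then (1 : ℝ) else 0

/-- The boundary matrix `∂_{d+1}[K]` of the complex `K` (rows and columns outside
`K` are zero). -/
noncomputable def SComplex.bdry (K : SComplex V) (d : ℕ) :
    Matrix (SimpIdx V d) (SimpIdx V (d + 1)) ℝ :=
  K.ind d * gbdry V d * K.ind (d + 1)

/-- A chain is supported on the complex `K`. -/
def SComplex.supportedOn (K : SComplex V) {d : ℕ} (f : SimpIdx V d → ℝ) : Prop :=
  ∀ σ : SimpIdx V d, f σ ≠ 0 → (σ : Finset V) ∈ K.faces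

/-- A `d`-dimensional chain is a cycle (its boundary vanishes; every `0`-chain is a cycle). -/
def IsCycle (V : Type) [Fintype V] [LinearOrder V] : (d : ℕ) → (SimpIdx V d → ℝ) → Prop
  | 0, _ => True
  | (d + 1), γ => gbdry V d *ᵥ γ = 0

/-- A `d`-dimensional cycle `γ` is null-homologous in `K` iff it is the boundary of a
`(d+1)`-chain of `K` (a unit `γ`-flow). -/
def SComplex.NullHomologous (K : SComplex V) (d : ℕ) (γ : SimpIdx V d → ℝ) : Prop :=
  ∃ f : SimpIdx V (d + 1) → ℝ, K.supportedOn f ∧ gbdry V d *ᵥ f = γ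

/-- The weighted effective resistance of `γ` in `K`: the infimum of flow energies
`∑ f(σ)²/w(σ)` over unit `γ`-flows `f` in `K`. -/
noncomputable def SComplex.effResW (K : SComplex V) (d : ℕ)
    (w : SimpIdx V (d + 1) → ℝ) (γ : SimpIdx V d → ℝ) : ℝ :=
  sInf {E : ℝ | ∃ f : SimpIdx V (d + 1) → ℝ, K.supportedOn f ∧ gbdry V d *ᵥ f = γ ∧
    E = ∑ σ : SimpIdx V (d + 1), f σ ^ 2 / w σ}

/-- Unweighted effective resistance. -/
noncomputable def SComplex.effRes (K : SComplex V) (d : ℕ) (γ : SimpIdx V d → ℝ) : ℝ :=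
  K.effResW d (fun _ => 1) γ

/-- The weighted up-Laplacian `L^{up,W} = ∂ W ∂ᵀ` of `K` acting on `d`-chains. -/
noncomputable def SComplex.upLapW (K : SComplex V) (d : ℕ) (w : SimpIdx V (d + 1) → ℝ) :
    Matrix (SimpIdx V d) (SimpIdx V d) ℝ :=
  K.bdry d * Matrix.diagonal w * (K.bdry d)ᵀ

/-- The (unweighted) up-Laplacian `L^{up} = ∂ ∂ᵀ` of `K` acting on `d`-chains. -/
noncomputable def SComplex.upLap (K : SComplex V) (d : ℕ) :
    Matrix (SimpIdx V d) (SimpIdx V d) ℝ :=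
  K.bdry d * (K.bdry d)ᵀ

/-- The down-Laplacian `L^{down} = ∂ᵀ ∂` of `K` acting on `d`-chains (zero on `0`-chains). -/
noncomputable def SComplex.downLap (K : SComplex V) :
    (d : ℕ) → Matrix (SimpIdx V d) (SimpIdx V d) ℝ
  | 0 => 0
  | (d + 1) => (K.bdry d)ᵀ * K.bdry d

/-- The combinatorial Laplacian `L = L^{up} + L^{down}`. -/
noncomputable def SComplex.combLap (K : SComplex V) (d : ℕ) :
    Matrix (SimpIdx V d) (SimpIdx V d) ℝ :=
  K.upLap d + K.downLap d

/-- `X` is the Moore–Penrose pseudoinverse of `A` (the four Penrose conditions). -/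
def IsMoorePenrose {m n : Type} [Fintype m] [Fintype n]
    (A : Matrix m n ℝ) (X : Matrix n m ℝ) : Prop :=
  A * X * A = A ∧ X * A * X = X ∧ (A * X)ᵀ = A * X ∧ (X * A)ᵀ = X * A

/-- `μ` is an eigenvalue of the real matrix `M`. -/
def IsEigen {n : Type} [Fintype n] (M : Matrix n n ℝ) (μ : ℝ) : Prop :=
  ∃ x : n → ℝ, x ≠ 0 ∧ M *ᵥ x = μ • x

/-- The spectral gap of `M`: the infimum of its nonzero (real) eigenvalues. -/
noncomputable def specGap {n : Type} [Fintype n] (M : Matrix n n ℝ) : ℝ :=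
  sInf {μ : ℝ | μ ≠ 0 ∧ IsEigen M μ}

/-- The number of `d`-dimensional simplices of `K`. -/
def nface (K : SComplex V) (d : ℕ) : ℕ :=
  (K.faces.filter fun s => s.card = d + 1).card

/-- The weighted effective capacitance of `γ` for `L ⊆ K`: the infimum of potential
energies `‖δ[K] p‖²_W` over unit `γ`-potentials `p` of `L`. -/
noncomputable def SComplex.effCapW (K L : SComplex V) (d : ℕ)
    (w : SimpIdx V (d + 1) → ℝ) (γ : SimpIdx V d → ℝ) : ℝ :=
  sInf {E : ℝ | ∃ p : SimpIdx V d → ℝ, L.supportedOn p ∧ (L.bdry d)ᵀ *ᵥ p = 0 ∧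
    p ⬝ᵥ γ = 1 ∧ E = ∑ σ : SimpIdx V (d + 1), ((K.bdry d)ᵀ *ᵥ p) σ ^ 2 * w σ}

/-- Unweighted effective capacitance. -/
noncomputable def SComplex.effCap (K L : SComplex V) (d : ℕ) (γ : SimpIdx V d → ℝ) : ℝ :=
  K.effCapW L d (fun _ => 1) γ

/-- The relative integral boundary matrix `∂[L, L₀]`: entries are kept only for
simplices of `L` not in `L₀`. -/
def relBdryZ (L L₀ : SComplex V) (d : ℕ) :
    Matrix (SimpIdx V d) (SimpIdx V (d + 1)) ℤ :=
  fun τ σ => if (τ : Finset V) ∈ L.faces ∧ (τ : Finset V) ∉ L₀.faces ∧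
      (σ : Finset V) ∈ L.faces ∧ (σ : Finset V) ∉ L₀.faces then
    bsign (τ : Finset V) (σ : Finset V) else 0

/-- Kernel of the relative boundary map out of relative `d`-chains. -/
noncomputable def relKer (L L₀ : SComplex V) : (d : ℕ) → Submodule ℤ (SimpIdx V d → ℤ)
  | 0 => ⊤
  | (d + 1) => LinearMap.ker (Matrix.toLin' (relBdryZ L L₀ d))

/-- The cardinality of the torsion subgroup of the relative homology group
`H_d(L, L₀; ℤ)`. -/
noncomputable def relTorsionCard (L L₀ : SComplex V) (d : ℕ) : ℕ :=
  Nat.card (Submodule.torsion ℤ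
    (↥(relKer L L₀ d) ⧸ Submodule.comap (relKer L L₀ d).subtype
      (LinearMap.range (Matrix.toLin' (relBdryZ L L₀ d)))))
section DetTorsionAux

variable {V : Type} [Fintype V] [LinearOrder V]

lemma bsign_eq_zero_of_not_subset {τ σ : Finset V} (h : ¬ τ ⊆ σ) : bsign τ σ = 0 := by
  unfold bsign; rw [if_neg]; tauto

lemma subset_of_bsign_ne_zero {τ σ : Finset V} (h : bsign τ σ ≠ 0) : τ ⊆ σ := by
  by_contra hc; exact h (bsign_eq_zero_of_not_subset hc)

lemma bsign_of_sdiff {τ σ : Finset V} {v : V} (hsub : τ ⊆ σ) (hcard : τ.card + 1 = σ.card)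
    (hsd : σ \ τ = {v}) :
    bsign τ σ = (-1 : ℤ) ^ (σ.filter (fun w => w < v)).card := by
  unfold bsign
  rw [if_pos ⟨hsub, hcard⟩, hsd]
  simp only [Finset.mem_singleton, exists_eq_left]

lemma bsign_key {ρ σ : Finset V} {u v : V} (huv : u < v) (hpair : σ \ ρ = {u, v})
    (hsub : ρ ⊆ σ) (hcard : ρ.card + 2 = σ.card) :
    bsign ρ (insert u ρ) * bsign (insert u ρ) σ +
      bsign ρ (insert v ρ) * bsign (insert v ρ) σ = 0 := by
  have hne : u ≠ v := ne_of_lt huv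
  have hu : u ∈ σ ∧ u ∉ ρ := by
    have : u ∈ σ \ ρ := by rw [hpair]; simp
    exact Finset.mem_sdiff.mp this
  have hv : v ∈ σ ∧ v ∉ ρ := by
    have : v ∈ σ \ ρ := by rw [hpair]; simp
    exact Finset.mem_sdiff.mp this
  set τ₁ := insert u ρ with hτ₁
  set τ₂ := insert v ρ with hτ₂
  have hc₁ : τ₁.card = ρ.card + 1 := Finset.card_insert_of_notMem hu.2
  have hc₂ : τ₂.card = ρ.card + 1 := Finset.card_insert_of_notMem hv.2
  have hsub₁ : τ₁ ⊆ σ := Finset.insert_subset hu.1 hsub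
  have hsub₂ : τ₂ ⊆ σ := Finset.insert_subset hv.1 hsub
  have hsd₁ : σ \ τ₁ = {v} := by
    rw [hτ₁, Finset.sdiff_insert, hpair, Finset.erase_insert (by simp [hne])]
  have hsd₂ : σ \ τ₂ = {u} := by
    rw [hτ₂, Finset.sdiff_insert, hpair, Finset.pair_comm,
      Finset.erase_insert (by simp [hne.symm])]
  have hd₁ : τ₁ \ ρ = {u} := Finset.insert_sdiff_cancel hu.2
  have hd₂ : τ₂ \ ρ = {v} := Finset.insert_sdiff_cancel hv.2
  have hσ₁ : σ = insert v τ₁ := by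
    rw [Finset.insert_eq, ← hsd₁, Finset.sdiff_union_of_subset hsub₁]
  have hσ₂ : σ = insert u τ₂ := by
    rw [Finset.insert_eq, ← hsd₂, Finset.sdiff_union_of_subset hsub₂]
  have hfu : σ.filter (fun w => w < u) = τ₁.filter (fun w => w < u) := by
    conv_lhs => rw [hσ₁]
    rw [Finset.filter_insert, if_neg (by exact fun hlt => absurd (hlt.trans huv) (lt_irrefl v))]
  have hfv : σ.filter (fun w => w < v) = insert u (τ₂.filter (fun w => w < v)) := by
    conv_lhs => rw [hσ₂]
    rw [Finset.filter_insert, if_pos huv]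
  have huτ₂ : u ∉ τ₂ := by
    rw [hτ₂, Finset.mem_insert]
    push_neg
    exact ⟨hne, hu.2⟩
  have hfvcard : (σ.filter (fun w => w < v)).card = (τ₂.filter (fun w => w < v)).card + 1 := by
    rw [hfv, Finset.card_insert_of_notMem (fun hmem => huτ₂ (Finset.mem_filter.mp hmem).1)]
  rw [bsign_of_sdiff hsub₁ (by omega) hsd₁, bsign_of_sdiff hsub₂ (by omega) hsd₂,
    bsign_of_sdiff (Finset.subset_insert u ρ) hc₁.symm hd₁,
    bsign_of_sdiff (Finset.subset_insert v ρ) hc₂.symm hd₂,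
    hfu, hfvcard]
  ring

lemma bsign_comp_aux (e : ℕ) (ρ : SimpIdx V e) (σ : SimpIdx V (e + 2)) {u v : V}
    (huv : u < v) (hpair : σ.1 \ ρ.1 = {u, v}) (hsub : ρ.1 ⊆ σ.1) :
    ∑ τ : SimpIdx V (e + 1), bsign ρ.1 τ.1 * bsign τ.1 σ.1 = 0 := by
  have hne : u ≠ v := ne_of_lt huv
  have hu : u ∈ σ.1 ∧ u ∉ ρ.1 := by
    have : u ∈ σ.1 \ ρ.1 := by rw [hpair]; simp
    exact Finset.mem_sdiff.mp this
  have hv : v ∈ σ.1 ∧ v ∉ ρ.1 := by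
    have : v ∈ σ.1 \ ρ.1 := by rw [hpair]; simp
    exact Finset.mem_sdiff.mp this
  set τ₁ : SimpIdx V (e + 1) :=
    ⟨insert u ρ.1, by rw [Finset.card_insert_of_notMem hu.2, ρ.2]⟩ with hτ₁
  set τ₂ : SimpIdx V (e + 1) :=
    ⟨insert v ρ.1, by rw [Finset.card_insert_of_notMem hv.2, ρ.2]⟩ with hτ₂
  have hτne : τ₁ ≠ τ₂ := by
    intro hEq
    have hveq : v ∈ (τ₁ : Finset V) := by
      rw [hEq]
      exact Finset.mem_insert_self v ρ.1
    rcases Finset.mem_insert.mp hveq with h | h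
    · exact hne h.symm
    · exact hv.2 h
  have hzero : ∀ τ : SimpIdx V (e + 1), τ ∉ ({τ₁, τ₂} : Finset (SimpIdx V (e + 1))) →
      bsign ρ.1 τ.1 * bsign τ.1 σ.1 = 0 := by
    intro τ hτ
    by_contra hne0
    have h1 : bsign ρ.1 τ.1 ≠ 0 := fun h => hne0 (by rw [h, zero_mul])
    have h2 : bsign τ.1 σ.1 ≠ 0 := fun h => hne0 (by rw [h, mul_zero])
    have hρτ := subset_of_bsign_ne_zero h1
    have hτσ := subset_of_bsign_ne_zero h2
    have hcd : (τ.1 \ ρ.1).card = 1 := by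
      rw [Finset.card_sdiff_of_subset hρτ, τ.2, ρ.2]
      omega
    obtain ⟨w, hw⟩ := Finset.card_eq_one.mp hcd
    have hτeq : τ.1 = insert w ρ.1 := by
      rw [Finset.insert_eq, ← hw, Finset.sdiff_union_of_subset hρτ]
    have hwmem : w ∈ σ.1 \ ρ.1 := by
      have hwτ : w ∈ τ.1 \ ρ.1 := by rw [hw]; simp
      rw [Finset.mem_sdiff] at hwτ ⊢
      exact ⟨hτσ hwτ.1, hwτ.2⟩
    rw [hpair, Finset.mem_insert, Finset.mem_singleton] at hwmem
    apply hτ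
    simp only [Finset.mem_insert, Finset.mem_singleton]
    rcases hwmem with rfl | rfl
    · exact Or.inl (Subtype.ext hτeq)
    · exact Or.inr (Subtype.ext hτeq)
  rw [← Finset.sum_subset (Finset.subset_univ ({τ₁, τ₂} : Finset (SimpIdx V (e + 1))))
      (fun τ _ hτ => hzero τ hτ),
    Finset.sum_pair hτne]
  exact bsign_key huv hpair hsub (by rw [ρ.2, σ.2])

lemma bsign_comp (e : ℕ) (ρ : SimpIdx V e) (σ : SimpIdx V (e + 2)) :
    ∑ τ : SimpIdx V (e + 1), bsign ρ.1 τ.1 * bsign τ.1 σ.1 = 0 := by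
  by_cases hsub : ρ.1 ⊆ σ.1
  · have hsd : (σ.1 \ ρ.1).card = 2 := by
      rw [Finset.card_sdiff_of_subset hsub, σ.2, ρ.2]
      omega
    obtain ⟨u, v, hne, hpair⟩ := Finset.card_eq_two.mp hsd
    rcases hne.lt_or_gt with h | h
    · exact bsign_comp_aux e ρ σ h hpair hsub
    · rw [Finset.pair_comm] at hpair
      exact bsign_comp_aux e ρ σ h hpair hsub
  · apply Finset.sum_eq_zero
    intro τ _
    by_cases hρτ : ρ.1 ⊆ τ.1
    · have : ¬ τ.1 ⊆ σ.1 := fun h => hsub (hρτ.trans h)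
      rw [bsign_eq_zero_of_not_subset this, mul_zero]
    · rw [bsign_eq_zero_of_not_subset hρτ, zero_mul]

lemma relBdry_comp (L L₀ : SComplex V) (e : ℕ) :
    relBdryZ L L₀ e * relBdryZ L L₀ (e + 1) = 0 := by
  ext ρ σ
  rw [Matrix.mul_apply, Matrix.zero_apply]
  by_cases hρ : ((ρ : Finset V) ∈ L.faces ∧ (ρ : Finset V) ∉ L₀.faces)
  · by_cases hσ : ((σ : Finset V) ∈ L.faces ∧ (σ : Finset V) ∉ L₀.faces)
    · rw [← bsign_comp e ρ σ]
      apply Finset.sum_congr rfl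
      intro τ _
      by_cases h1 : bsign ρ.1 τ.1 = 0
      · simp [relBdryZ, h1]
      by_cases h2 : bsign τ.1 σ.1 = 0
      · simp [relBdryZ, h2]
      have hρτ := subset_of_bsign_ne_zero h1
      have hτσ := subset_of_bsign_ne_zero h2
      have hτnonempty : (τ : Finset V).Nonempty := by
        rw [← Finset.card_pos, τ.2]; omega
      have hρnonempty : (ρ : Finset V).Nonempty := by
        rw [← Finset.card_pos, ρ.2]; omega
      have hτL : (τ : Finset V) ∈ L.faces := L.down_closed σ.1 hσ.1 τ.1 hτσ hτnonempty
      have hτL₀ : (τ : Finset V) ∉ L₀.faces := fun hmem =>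
        hρ.2 (L₀.down_closed τ.1 hmem ρ.1 hρτ hρnonempty)
      unfold relBdryZ
      rw [if_pos ⟨hρ.1, hρ.2, hτL, hτL₀⟩, if_pos ⟨hτL, hτL₀, hσ.1, hσ.2⟩]
    · apply Finset.sum_eq_zero
      intro τ _
      have : relBdryZ L L₀ (e + 1) τ σ = 0 := if_neg (fun hh => hσ ⟨hh.2.2.1, hh.2.2.2⟩)
      rw [this, mul_zero]
  · apply Finset.sum_eq_zero
    intro τ _
    have : relBdryZ L L₀ e ρ τ = 0 := if_neg (fun hh => hρ ⟨hh.1, hh.2.1⟩)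
    rw [this, zero_mul]

lemma range_le_relKer (L L₀ : SComplex V) (d : ℕ) (z : SimpIdx V d → ℤ)
    (hz : z ∈ LinearMap.range (Matrix.toLin' (relBdryZ L L₀ d))) : z ∈ relKer L L₀ d := by
  cases d with
  | zero => exact Submodule.mem_top
  | succ e =>
    obtain ⟨y, rfl⟩ := hz
    show Matrix.toLin' (relBdryZ L L₀ e) _ = 0
    rw [Matrix.toLin'_apply, Matrix.toLin'_apply, Matrix.mulVec_mulVec, relBdry_comp,
      Matrix.zero_mulVec]

lemma mem_relKer_of_smul (L L₀ : SComplex V) (d : ℕ) {n : ℤ} (hn : n ≠ 0)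
    {z : SimpIdx V d → ℤ} (h : n • z ∈ relKer L L₀ d) : z ∈ relKer L L₀ d := by
  cases d with
  | zero => exact Submodule.mem_top
  | succ e =>
    have h' : n • Matrix.toLin' (relBdryZ L L₀ e) z = 0 := by
      rw [← _root_.map_smul]
      exact h
    rcases smul_eq_zero.mp h' with h'' | h''
    · exact absurd h'' hn
    · exact h''

lemma card_quotient_range_toLin'_eq {k : ℕ} (B : Matrix (Fin k) (Fin k) ℤ) (hdet : B.det ≠ 0) :
    Nat.card ((Fin k → ℤ) ⧸ LinearMap.range (Matrix.toLin' B)) = B.det.natAbs := by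
  classical
  have hsmul : ∀ x : Fin k → ℤ, B.det • x = B.adjugate *ᵥ (B *ᵥ x) := by
    intro x
    rw [Matrix.mulVec_mulVec, Matrix.adjugate_mul, Matrix.smul_mulVec, Matrix.one_mulVec]
  have hker : LinearMap.ker (Matrix.toLin' B) = ⊥ := by
    rw [Submodule.eq_bot_iff]
    intro x hx
    rw [LinearMap.mem_ker, Matrix.toLin'_apply] at hx
    have h2 := hsmul x
    rw [hx, Matrix.mulVec_zero] at h2
    rcases smul_eq_zero.mp h2 with h | h
    · exact absurd h hdet
    · exact h
  have hinj : Function.Injective (Matrix.toLin' B) := LinearMap.ker_eq_bot.mp hker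
  set N := LinearMap.range (Matrix.toLin' B) with hNdef
  let gE : (Fin k → ℤ) ≃ₗ[ℤ] N := LinearEquiv.ofInjective (Matrix.toLin' B) hinj
  obtain ⟨n, snf⟩ := N.smithNormalForm (Pi.basisFun ℤ (Fin k))
  have hnk : k = n := by
    have e1 : Fin n ≃ Fin k := (snf.bN.map gE.symm).indexEquiv (Pi.basisFun ℤ (Fin k))
    have h2 := Fintype.card_congr e1
    simpa using h2.symm
  subst hnk
  have hidx : N.toAddSubgroup.index = ∏ i : Fin k, (snf.a i).natAbs := by
    rw [snf.toAddSubgroup_index_eq_ite, if_pos (by simp)]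
    simp [Int.index_zmultiples]
  have hcard : Nat.card ((Fin k → ℤ) ⧸ N) = N.toAddSubgroup.index :=
    (AddSubgroup.index_eq_card _).symm
  -- determinant computation
  let T : (Fin k → ℤ) →ₗ[ℤ] (Fin k → ℤ) := N.subtype ∘ₗ snf.bN.equivFun.symm.toLinearMap
  have hcomp : T ∘ₗ (gE.trans snf.bN.equivFun).toLinearMap = Matrix.toLin' B := by
    apply LinearMap.ext
    intro x
    show N.subtype (snf.bN.equivFun.symm (snf.bN.equivFun (gE x))) = Matrix.toLin' B x
    rw [LinearEquiv.symm_apply_apply, Submodule.subtype_apply]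
    rfl
  have hdetT : (LinearMap.det T).natAbs = B.det.natAbs := by
    have h1 := LinearMap.det_comp T (gE.trans snf.bN.equivFun).toLinearMap
    rw [hcomp, LinearMap.det_toLin'] at h1
    have hu := LinearEquiv.isUnit_det' (gE.trans snf.bN.equivFun)
    rcases Int.isUnit_iff.mp hu with h | h <;> rw [h1, Int.natAbs_mul, h] <;> simp
  let π : Fin k ≃ Fin k :=
    Equiv.ofBijective snf.f (Finite.injective_iff_bijective.mp snf.f.injective)
  let Mb : Matrix (Fin k) (Fin k) ℤ := fun i j => snf.bM j i
  have hMbdet : IsUnit Mb.det := by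
    have : Mb = (Pi.basisFun ℤ (Fin k)).toMatrix ⇑snf.bM := by
      ext i j
      simp [Mb, Module.Basis.toMatrix_apply]
    rw [this, ← Module.Basis.det_apply]
    exact Module.Basis.isUnit_det _ _
  have hPermdet : IsUnit ((1 : Matrix (Fin k) (Fin k) ℤ).submatrix id ⇑π).det := by
    have : (1 : Matrix (Fin k) (Fin k) ℤ).submatrix id ⇑π = (Equiv.Perm.permMatrix ℤ π)ᵀ := by
      ext i j
      simp only [Matrix.submatrix_apply, id_eq, Matrix.one_apply, Matrix.transpose_apply,
        Equiv.Perm.permMatrix, PEquiv.toMatrix_apply, Equiv.toPEquiv_apply, Option.mem_def,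
        Option.some_inj]
      exact if_congr eq_comm rfl rfl
    rw [this, Matrix.det_transpose, Matrix.det_permutation]
    exact (Equiv.Perm.sign π).isUnit
  have hP : LinearMap.toMatrix' T =
      (Mb * (1 : Matrix (Fin k) (Fin k) ℤ).submatrix id ⇑π) * Matrix.diagonal snf.a := by
    ext i j
    rw [Matrix.mul_diagonal, Matrix.mul_apply]
    have hTj : T (Pi.single j 1) = (snf.a j : ℤ) • (snf.bM (snf.f j) : Fin k → ℤ) := by
      have hb : snf.bN.equivFun.symm (Pi.single j 1) = snf.bN j := by
        rw [Module.Basis.equivFun_symm_apply]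
        simp [Pi.single_apply]
      show N.subtype (snf.bN.equivFun.symm (Pi.single j 1)) = _
      rw [hb, Submodule.subtype_apply, snf.snf j]
    rw [LinearMap.toMatrix'_apply]
    have hsum : ∑ l, Mb i l * (1 : Matrix (Fin k) (Fin k) ℤ).submatrix id ⇑π l j
        = Mb i (π j) := by
      rw [Finset.sum_eq_single (π j)]
      · simp [Matrix.one_apply]
      · intro l _ hl
        simp [Matrix.one_apply, hl]
      · simp
    rw [hsum]
    have : (Pi.single j 1 : Fin k → ℤ) = fun l => if l = j then 1 else 0 := by
      ext l
      simp [Pi.single_apply]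
    rw [hTj]
    have hπ : π j = snf.f j := rfl
    simp [Mb, hπ, mul_comm]
  have hdetT2 : (LinearMap.det T).natAbs = ∏ i : Fin k, (snf.a i).natAbs := by
    rw [← LinearMap.det_toMatrix' T, hP, Matrix.det_mul, Matrix.det_mul, Matrix.det_diagonal,
      Int.natAbs_mul, Int.natAbs_mul]
    rcases Int.isUnit_iff.mp hMbdet with h | h <;>
      rcases Int.isUnit_iff.mp hPermdet with h' | h' <;>
      rw [h, h'] <;> simp <;> exact map_prod Int.natAbsHom snf.a Finset.univ
  rw [hcard, hidx, ← hdetT2, hdetT]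

end DetTorsionAux

/-- **Determinant bound by relative torsion.** Let `B = ∂[L, L₀]` be a `k × k` square
submatrix of the integral boundary matrix of a simplicial complex `K`, obtained by
including the columns of the `(d+1)`-simplices of `L` outside `L₀` and the rows of
the `d`-simplices of `L` outside `L₀`. Then `|det B|` is at most the cardinality of
the torsion subgroup of the relative homology group `H_d(L, L₀; ℤ)`. -/
theorem det_relative_boundary_le_torsion_card
    {V : Type} [Fintype V] [LinearOrder V] (K L L₀ : SComplex V)
    (hL : L.faces ⊆ K.faces) (hL₀ : L₀.faces ⊆ L.faces) (d : ℕ)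
    (hdimL : ∀ s ∈ L.faces, s.card ≤ d + 2)
    (hdimL₀ : ∀ s ∈ L₀.faces, s.card ≤ d + 1)
    (k : ℕ) (r : Fin k → SimpIdx V d) (c : Fin k → SimpIdx V (d + 1))
    (hrinj : Function.Injective r) (hcinj : Function.Injective c)
    (hr : ∀ τ : SimpIdx V d,
      ((τ : Finset V) ∈ L.faces ∧ (τ : Finset V) ∉ L₀.faces) ↔ τ ∈ Set.range r)
    (hc : ∀ σ : SimpIdx V (d + 1),
      ((σ : Finset V) ∈ L.faces ∧ (σ : Finset V) ∉ L₀.faces) ↔ σ ∈ Set.range c) :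
    (((gbdryZ V d).submatrix r c).det).natAbs ≤ relTorsionCard L L₀ d := by
  classical
  set B := (gbdryZ V d).submatrix r c with hB
  by_cases hdet : B.det = 0
  · rw [hdet]
    exact Nat.zero_le _
  set A := relBdryZ L L₀ d with hA
  set Er : Matrix (SimpIdx V d) (Fin k) ℤ := fun τ i => if τ = r i then 1 else 0 with hEr
  set Ec : Matrix (SimpIdx V (d + 1)) (Fin k) ℤ := fun σ j => if σ = c j then 1 else 0 with hEc
  have hrrel : ∀ i : Fin k, ((r i : Finset V) ∈ L.faces ∧ (r i : Finset V) ∉ L₀.faces) :=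
    fun i => (hr (r i)).mpr ⟨i, rfl⟩
  have hcrel : ∀ j : Fin k, ((c j : Finset V) ∈ L.faces ∧ (c j : Finset V) ∉ L₀.faces) :=
    fun j => (hc (c j)).mpr ⟨j, rfl⟩
  -- structural identity A = Er * B * Ecᵀ
  have hErB : ∀ (i₀ : Fin k) (j : Fin k), (Er * B) (r i₀) j = B i₀ j := by
    intro i₀ j
    rw [Matrix.mul_apply, Finset.sum_eq_single i₀]
    · simp [hEr]
    · intro l _ hl
      have : r i₀ ≠ r l := fun hEq => hl (hrinj hEq.symm)
      simp [hEr, this]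
    · simp
  have hErB0 : ∀ (τ : SimpIdx V d), τ ∉ Set.range r → ∀ j, (Er * B) τ j = 0 := by
    intro τ hτ j
    rw [Matrix.mul_apply]
    apply Finset.sum_eq_zero
    intro i _
    have : τ ≠ r i := fun hEq => hτ ⟨i, hEq.symm⟩
    simp [hEr, this]
  have hAeq : A = Er * B * Ecᵀ := by
    ext τ σ
    rw [Matrix.mul_apply]
    by_cases hτ : τ ∈ Set.range r
    · obtain ⟨i₀, rfl⟩ := hτ
      by_cases hσ : σ ∈ Set.range c
      · obtain ⟨j₀, rfl⟩ := hσ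
        rw [Finset.sum_eq_single j₀]
        · rw [hErB]
          have : A (r i₀) (c j₀) = bsign (r i₀ : Finset V) (c j₀ : Finset V) :=
            if_pos ⟨(hrrel i₀).1, (hrrel i₀).2, (hcrel j₀).1, (hcrel j₀).2⟩
          rw [this]
          simp [hEc, hB, gbdryZ, Matrix.transpose, Matrix.of_apply]
        · intro l _ hl
          have : c j₀ ≠ c l := fun hEq => hl (hcinj hEq.symm)
          simp [hEc, this, Matrix.transpose, Matrix.of_apply]
        · simp
      · have hA0 : A (r i₀) σ = 0 :=
          if_neg (fun hh => hσ ((hc σ).mp ⟨hh.2.2.1, hh.2.2.2⟩))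
        rw [hA0]
        symm
        apply Finset.sum_eq_zero
        intro j _
        have : σ ≠ c j := fun hEq => hσ ⟨j, hEq.symm⟩
        simp [hEc, this, Matrix.transpose, Matrix.of_apply]
    · have hA0 : A τ σ = 0 :=
        if_neg (fun hh => hτ ((hr τ).mp ⟨hh.1, hh.2.1⟩))
      rw [hA0]
      symm
      apply Finset.sum_eq_zero
      intro j _
      rw [hErB0 τ hτ j, zero_mul]
  have hErtEr : Erᵀ * Er = (1 : Matrix (Fin k) (Fin k) ℤ) := by
    ext i j
    rw [Matrix.mul_apply]
    by_cases hij : i = j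
    · subst hij
      rw [Finset.sum_eq_single (r i)]
      · simp [hEr, Matrix.transpose, Matrix.of_apply]
      · intro τ _ hτ
        simp [hEr, Matrix.transpose, Matrix.of_apply, hτ]
      · simp
    · rw [Matrix.one_apply_ne hij]
      apply Finset.sum_eq_zero
      intro τ _
      by_cases h1 : τ = r i
      · have : τ ≠ r j := by
          rw [h1]
          exact fun hEq => hij (hrinj hEq)
        simp [hEr, this, Matrix.transpose, Matrix.of_apply]
      · simp [hEr, h1, Matrix.transpose, Matrix.of_apply]
  have hEctEc : Ecᵀ * Ec = (1 : Matrix (Fin k) (Fin k) ℤ) := by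
    ext i j
    rw [Matrix.mul_apply]
    by_cases hij : i = j
    · subst hij
      rw [Finset.sum_eq_single (c i)]
      · simp [hEc, Matrix.transpose, Matrix.of_apply]
      · intro σ _ hσ
        simp [hEc, Matrix.transpose, Matrix.of_apply, hσ]
      · simp
    · rw [Matrix.one_apply_ne hij]
      apply Finset.sum_eq_zero
      intro σ _
      by_cases h1 : σ = c i
      · have : σ ≠ c j := by
          rw [h1]
          exact fun hEq => hij (hcinj hEq)
        simp [hEc, this, Matrix.transpose, Matrix.of_apply]
      · simp [hEc, h1, Matrix.transpose, Matrix.of_apply]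
  have hErmul : Er * B = A * Ec := by
    rw [hAeq, Matrix.mul_assoc (Er * B) Ecᵀ Ec, hEctEc, Matrix.mul_one]
  have hErtA : Erᵀ * A = B * Ecᵀ := by
    rw [hAeq, ← Matrix.mul_assoc, ← Matrix.mul_assoc, hErtEr, Matrix.one_mul]
  have hcancel : ∀ x : Fin k → ℤ, Erᵀ *ᵥ (Er *ᵥ x) = x := by
    intro x
    rw [Matrix.mulVec_mulVec, hErtEr, Matrix.one_mulVec]
  have hrow0 : ∀ (τ : SimpIdx V d), τ ∉ Set.range r →
      ∀ y : SimpIdx V (d + 1) → ℤ, (A *ᵥ y) τ = 0 := by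
    intro τ hτ y
    have hA0 : ∀ σ, A τ σ = 0 :=
      fun σ => if_neg (fun hh => hτ ((hr τ).mp ⟨hh.1, hh.2.1⟩))
    simp [Matrix.mulVec, dotProduct, hA0]
  have hrec : ∀ z : SimpIdx V d → ℤ, (∀ τ, τ ∉ Set.range r → z τ = 0) →
      Er *ᵥ (Erᵀ *ᵥ z) = z := by
    intro z hz
    funext τ
    have hw : ∀ i, (Erᵀ *ᵥ z) i = z (r i) := by
      intro i
      rw [Matrix.mulVec, dotProduct, Finset.sum_eq_single (r i)]
      · simp [hEr, Matrix.transpose, Matrix.of_apply]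
      · intro τ' _ hτ'
        simp [hEr, hτ', Matrix.transpose, Matrix.of_apply]
      · simp
    by_cases hτ : τ ∈ Set.range r
    · obtain ⟨i₀, rfl⟩ := hτ
      rw [Matrix.mulVec, dotProduct, Finset.sum_eq_single i₀]
      · rw [hw i₀]
        simp [hEr, Matrix.transpose, Matrix.of_apply]
      · intro l _ hl
        have : r i₀ ≠ r l := fun hEq => hl (hrinj hEq.symm)
        simp [hEr, this, Matrix.transpose, Matrix.of_apply]
      · simp
    · rw [hz τ hτ]
      simp only [Matrix.mulVec, dotProduct]
      apply Finset.sum_eq_zero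
      intro i _
      have : τ ≠ r i := fun hEq => hτ ⟨i, hEq.symm⟩
      simp [hEr, this, Matrix.transpose, Matrix.of_apply]
  have hdets : ∀ x : Fin k → ℤ, B.det • x = B *ᵥ (B.adjugate *ᵥ x) := by
    intro x
    rw [Matrix.mulVec_mulVec, Matrix.mul_adjugate, Matrix.smul_mulVec, Matrix.one_mulVec]
  -- the extension map lands in the kernel of the relative boundary
  have hZ : ∀ x : Fin k → ℤ, Er *ᵥ x ∈ relKer L L₀ d := by
    intro x
    apply mem_relKer_of_smul L L₀ d hdet
    have h1 : B.det • (Er *ᵥ x) = A *ᵥ (Ec *ᵥ (B.adjugate *ᵥ x)) := by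
      rw [Matrix.mulVec_mulVec, Matrix.mulVec_mulVec, ← hErmul, ← Matrix.mulVec_mulVec,
        ← Matrix.mulVec_mulVec, ← hdets, Matrix.mulVec_smul]
    rw [h1]
    exact range_le_relKer L L₀ d _ ⟨Ec *ᵥ (B.adjugate *ᵥ x), by rw [Matrix.toLin'_apply]⟩
  set Z := relKer L L₀ d with hZdef
  set NN := Submodule.comap Z.subtype (LinearMap.range (Matrix.toLin' A)) with hNN
  let g : (Fin k → ℤ) →ₗ[ℤ] Z := LinearMap.codRestrict Z (Matrix.toLin' Er)
    (fun x => by rw [Matrix.toLin'_apply]; exact hZ x)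
  let ψ : (Fin k → ℤ) →ₗ[ℤ] (Z ⧸ NN) := NN.mkQ.comp g
  have hψ : ∀ x : Fin k → ℤ, ψ x = Submodule.Quotient.mk (⟨Er *ᵥ x, hZ x⟩ : Z) := by
    intro x
    rfl
  have hkerψ : LinearMap.ker ψ = LinearMap.range (Matrix.toLin' B) := by
    ext x
    rw [LinearMap.mem_ker, hψ, Submodule.Quotient.mk_eq_zero, hNN, Submodule.mem_comap]
    constructor
    · rintro ⟨y, hy⟩
      rw [Matrix.toLin'_apply] at hy
      have hy' : A *ᵥ y = Er *ᵥ x := hy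
      refine ⟨Ecᵀ *ᵥ y, ?_⟩
      rw [Matrix.toLin'_apply, Matrix.mulVec_mulVec, ← hErtA, ← Matrix.mulVec_mulVec, hy',
        hcancel]
    · rintro ⟨w, rfl⟩
      refine ⟨Ec *ᵥ w, ?_⟩
      rw [Matrix.toLin'_apply, Matrix.toLin'_apply, Matrix.mulVec_mulVec, ← hErmul,
        ← Matrix.mulVec_mulVec]
      rfl
  have hrangeψ : LinearMap.range ψ = Submodule.torsion ℤ (Z ⧸ NN) := by
    apply le_antisymm
    · rintro q ⟨x, rfl⟩
      rw [Submodule.mem_torsion_iff]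
      refine ⟨⟨B.det, mem_nonZeroDivisors_of_ne_zero hdet⟩, ?_⟩
      have hmem : B.det • x ∈ LinearMap.ker ψ := by
        rw [hkerψ]
        exact ⟨B.adjugate *ᵥ x, by rw [Matrix.toLin'_apply, ← hdets]⟩
      have hs : (⟨B.det, mem_nonZeroDivisors_of_ne_zero hdet⟩ : nonZeroDivisors ℤ) • ψ x
          = ψ (B.det • x) := by
        show B.det • ψ x = ψ (B.det • x)
        exact (_root_.map_smul ψ B.det x).symm
      rw [hs, LinearMap.mem_ker.mp hmem]
    · rintro q hq
      obtain ⟨a, ha⟩ := (Submodule.mem_torsion_iff _).mp hq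
      obtain ⟨⟨z, hzZ⟩, rfl⟩ := Submodule.Quotient.mk_surjective NN q
      have hamem : ((a : ℤ) • (⟨z, hzZ⟩ : Z)) ∈ NN := by
        rw [← Submodule.Quotient.mk_eq_zero]
        rw [← ha]
        rfl
      rw [hNN, Submodule.mem_comap] at hamem
      obtain ⟨y, hy⟩ := hamem
      rw [Matrix.toLin'_apply] at hy
      have hy' : A *ᵥ y = (a : ℤ) • z := hy
      have hane : (a : ℤ) ≠ 0 := nonZeroDivisors.ne_zero a.2
      have hsupp : ∀ τ, τ ∉ Set.range r → z τ = 0 := by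
        intro τ hτ
        have h0 : (a : ℤ) * z τ = 0 := by
          have := congrFun hy' τ
          rw [hrow0 τ hτ y] at this
          exact this.symm
        rcases mul_eq_zero.mp h0 with h | h
        · exact absurd h hane
        · exact h
      refine ⟨Erᵀ *ᵥ z, ?_⟩
      rw [hψ]
      congr 1
      exact Subtype.ext (hrec z hsupp)
  have hcard1 : Nat.card ((Fin k → ℤ) ⧸ LinearMap.range (Matrix.toLin' B))
      = Nat.card (Submodule.torsion ℤ (Z ⧸ NN)) := by
    calc Nat.card ((Fin k → ℤ) ⧸ LinearMap.range (Matrix.toLin' B))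
        = Nat.card ((Fin k → ℤ) ⧸ LinearMap.ker ψ) :=
          congrArg (fun S : Submodule ℤ (Fin k → ℤ) => Nat.card ((Fin k → ℤ) ⧸ S)) hkerψ.symm
      _ = Nat.card (LinearMap.range ψ) := Nat.card_congr ψ.quotKerEquivRange.toEquiv
      _ = Nat.card (Submodule.torsion ℤ (Z ⧸ NN)) :=
          congrArg (fun S : Submodule ℤ (Z ⧸ NN) => Nat.card S) hrangeψ
  have hfinal : relTorsionCard L L₀ d = Nat.card (Submodule.torsion ℤ (Z ⧸ NN)) := rfl
  rw [hfinal, ← hcard1, card_quotient_range_toLin'_eq B hdet]
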